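/- Under the monotone likelihood ratio property with the symmetry p₂f₂(x) = p₁f₁(-x) for all x (and X atomless), the optimal selective classifier is Y*_γ = 2·1{X ≥ τ_γ} + 1·1{X ≤ -τ_γ}, where τ_γ ≥ 0 satisfies P(-τ_γ ≤ X ≤ τ_γ) = γ, equivalently 1 - 2P(X ≥ τ_γ) = γ, and its conditional misclassification rate equals (p₁P₁(X ≥ τ_γ) + p₂P₂(X ≤ -τ_γ))/(1-γ). -/
import Mathlib


open MeasureTheory Set
open scoped Classical

/-- Neyman–Pearson-type exchange lemma: if `0 ≤ L ≤ m`, the two-point swap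
inequality holds between `A` and its complement, and `B` has the same `m`-mass
as `A`, then `∫_B L ≤ ∫_A L`. -/
lemma integral_min_compare
    (L m : ℝ → ℝ) (A B : Set ℝ)
    (hA : MeasurableSet A) (hB : MeasurableSet B)
    (hLmeas : Measurable L)
    (hL0 : ∀ x, 0 ≤ L x) (hLm : ∀ x, L x ≤ m x)
    (hmint : Integrable m)
    (hkey : ∀ x ∈ A, ∀ y ∉ A, L y * m x ≤ L x * m y)
    (heq : ∫ x in B, m x = ∫ x in A, m x) :
    ∫ x in B, L x ≤ ∫ x in A, L x := by
  have hLint : Integrable L :=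
    hmint.mono' hLmeas.aestronglyMeasurable
      (Filter.Eventually.of_forall fun x => by
        rw [Real.norm_eq_abs, abs_of_nonneg (hL0 x)]; exact hLm x)
  set S : Set ℝ := A \ B with hS
  set T : Set ℝ := B \ A with hT
  have hSmeas : MeasurableSet S := hA.diff hB
  have hTmeas : MeasurableSet T := hB.diff hA
  have hABmeas : MeasurableSet (A ∩ B) := hA.inter hB
  have hdAB : Disjoint S (A ∩ B) := disjoint_sdiff_left.mono_right inter_subset_right
  have hdBA : Disjoint T (A ∩ B) := by
    rw [inter_comm]; exact disjoint_sdiff_left.mono_right inter_subset_right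
  have hsplitA : ∀ g : ℝ → ℝ, Integrable g →
      ∫ x in A, g x = (∫ x in S, g x) + ∫ x in A ∩ B, g x := by
    intro g hg
    rw [← setIntegral_union hdAB hABmeas hg.integrableOn hg.integrableOn,
      diff_union_inter]
  have hsplitB : ∀ g : ℝ → ℝ, Integrable g →
      ∫ x in B, g x = (∫ x in T, g x) + ∫ x in A ∩ B, g x := by
    intro g hg
    rw [← setIntegral_union hdBA hABmeas hg.integrableOn hg.integrableOn]
    rw [inter_comm, diff_union_inter]
  have hmeq : ∫ x in T, m x = ∫ x in S, m x := by
    have h1 := hsplitA m hmint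
    have h2 := hsplitB m hmint
    rw [h1, h2] at heq; linarith
  set α : ℝ := ∫ x in S, m x with hα
  set β : ℝ := ∫ x in S, L x with hβ
  have hα0 : 0 ≤ α := setIntegral_nonneg hSmeas fun x _ => (hL0 x).trans (hLm x)
  have hβ0 : 0 ≤ β := setIntegral_nonneg hSmeas fun x _ => hL0 x
  -- inner inequality
  have hinner : ∀ y ∈ T, L y * α ≤ β * m y := by
    intro y hy
    have h1 : L y * α = ∫ x in S, L y * m x := (integral_const_mul _ _).symm
    have h2 : ∫ x in S, L x * m y = β * m y := by
      rw [integral_mul_const]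
    rw [h1, ← h2]
    refine setIntegral_mono_on ((hmint.integrableOn).const_mul _)
      ((hLint.integrableOn).mul_const _) hSmeas ?_
    intro x hx
    exact hkey x hx.1 y hy.2
  have houter : (∫ y in T, L y) * α ≤ β * α := by
    have h1 : (∫ y in T, L y) * α = ∫ y in T, L y * α := by
      rw [integral_mul_const]
    have h2 : ∫ y in T, β * m y = β * ∫ y in T, m y := integral_const_mul _ _
    have h3 : ∫ y in T, L y * α ≤ ∫ y in T, β * m y := by
      refine setIntegral_mono_on ((hLint.integrableOn).mul_const _)
        ((hmint.integrableOn).const_mul _) hTmeas hinner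
    rw [h1]
    calc ∫ y in T, L y * α ≤ ∫ y in T, β * m y := h3
      _ = β * α := by rw [h2, hmeq]
  have hTS : ∫ y in T, L y ≤ β := by
    rcases hα0.lt_or_eq with hpos | hzero
    · exact le_of_mul_le_mul_right houter hpos
    · have hmT0 : ∫ x in T, m x = 0 := by rw [hmeq, ← hzero]
      have h4 : ∫ y in T, L y ≤ ∫ y in T, m y :=
        setIntegral_mono_on hLint.integrableOn hmint.integrableOn hTmeas
          fun x _ => hLm x
      calc ∫ y in T, L y ≤ ∫ y in T, m y := h4
        _ = 0 := hmT0
        _ ≤ β := hβ0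
  rw [hsplitA L hLint, hsplitB L hLint]
  linarith

/-- Selective classification under the monotone likelihood ratio property with the
symmetry `p₂f₂(x) = p₁f₁(-x)` (atomless `X`): the optimal selective classifier is
`Y*_γ = 2·1{X ≥ τ_γ} + 1·1{X ≤ -τ_γ}` with `τ_γ ≥ 0` such that
`P(-τ_γ ≤ X ≤ τ_γ) = γ`, equivalently `1 - 2P(X ≥ τ_γ) = γ`; its conditional
misclassification rate equals `(p₁P₁(X ≥ τ_γ) + p₂P₂(X ≤ -τ_γ))/(1-γ)` and it
minimizes the conditional misclassification rate among all selective classifiers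
with abstention probability `γ`. -/
theorem mlr_symmetric_selective_optimal
    (f₁ f₂ : ℝ → ℝ) (p₁ p₂ : ℝ) (γ τ : ℝ) (hτ : 0 ≤ τ)
    (hγ : γ ∈ Ico (0 : ℝ) 1)
    (hf₁ : Measurable f₁) (hf₂ : Measurable f₂)
    (hf₁0 : ∀ x, 0 ≤ f₁ x) (hf₂0 : ∀ x, 0 ≤ f₂ x)
    (hp₁ : 0 < p₁) (hp₂ : 0 < p₂) (hpsum : p₁ + p₂ = 1)
    (hf₁int : Integrable f₁) (hf₂int : Integrable f₂)
    (hf₁prob : ∫ x, f₁ x = 1) (hf₂prob : ∫ x, f₂ x = 1)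
    -- monotone likelihood ratio: `f₂/f₁` is increasing
    (hMLR : ∀ x y : ℝ, x ≤ y → f₂ x * f₁ y ≤ f₂ y * f₁ x)
    -- symmetry: `p₂ f₂(x) = p₁ f₁(-x)`
    (hsym : ∀ x : ℝ, p₂ * f₂ x = p₁ * f₁ (-x))
    -- `X` has no atoms: the mixture density gives zero mass to points
    (hatomless : ∀ t : ℝ, ∫ x in {t}, (p₁ * f₁ x + p₂ * f₂ x) = 0)
    -- threshold calibration: `P(-τ ≤ X ≤ τ) = γ`
    (hτγ : ∫ x in Icc (-τ) τ, (p₁ * f₁ x + p₂ * f₂ x) = γ)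
    (Ystar : ℝ → ℕ)
    (hYstar : ∀ x : ℝ, Ystar x = if τ ≤ x then 2 else if x ≤ -τ then 1 else 0) :
    -- equivalently `1 - 2 P(X ≥ τ_γ) = γ`
    1 - 2 * (∫ x in Ici τ, (p₁ * f₁ x + p₂ * f₂ x)) = γ ∧
    -- conditional misclassification rate of `Y*_γ`
    ((∫ x in {x | Ystar x = 2}, p₁ * f₁ x) + ∫ x in {x | Ystar x = 1}, p₂ * f₂ x) /
        (1 - γ) =
      (p₁ * (∫ x in Ici τ, f₁ x) + p₂ * ∫ x in Iic (-τ), f₂ x) / (1 - γ) ∧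
    -- optimality
    ∀ h : ℝ → ℕ, Measurable h → (∀ x, h x ≤ 2) →
      (∫ x in {x | h x = 0}, (p₁ * f₁ x + p₂ * f₂ x)) = γ →
      ((∫ x in {x | Ystar x = 2}, p₁ * f₁ x) +
          ∫ x in {x | Ystar x = 1}, p₂ * f₂ x) / (1 - γ) ≤
        ((∫ x in {x | h x = 2}, p₁ * f₁ x) +
            ∫ x in {x | h x = 1}, p₂ * f₂ x) / (1 - γ) := by
  set m : ℝ → ℝ := fun x => p₁ * f₁ x + p₂ * f₂ x with hm
  have hm_meas : Measurable m := (hf₁.const_mul p₁).add (hf₂.const_mul p₂)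
  have hm_int : Integrable m := (hf₁int.const_mul p₁).add (hf₂int.const_mul p₂)
  have hm0 : ∀ x, 0 ≤ m x := fun x =>
    add_nonneg (mul_nonneg hp₁.le (hf₁0 x)) (mul_nonneg hp₂.le (hf₂0 x))
  have hm_total : ∫ x, m x = 1 := by
    rw [hm, integral_add (hf₁int.const_mul p₁) (hf₂int.const_mul p₂),
      integral_const_mul, integral_const_mul, hf₁prob, hf₂prob]
    linarith
  have hm_even : ∀ x, m (-x) = m x := by
    intro x
    have h1 := hsym x
    have h2 := hsym (-x)
    rw [neg_neg] at h2
    simp only [hm]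
    linarith
  -- sign comparison of the two weighted densities
  have hkey0 : ∀ x : ℝ, 0 ≤ x → p₁ * f₁ x ≤ p₂ * f₂ x := by
    intro x hx
    have h1 := hsym x
    have h2 := hsym (-x)
    rw [neg_neg] at h2
    have hmlr := hMLR (-x) x (by linarith)
    have key : p₁ * f₁ x * f₁ x ≤ p₁ * f₁ (-x) * f₁ (-x) := by
      calc p₁ * f₁ x * f₁ x = p₂ * (f₂ (-x) * f₁ x) := by rw [← h2]; ring
        _ ≤ p₂ * (f₂ x * f₁ (-x)) := mul_le_mul_of_nonneg_left hmlr hp₂.le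
        _ = (p₂ * f₂ x) * f₁ (-x) := by ring
        _ = p₁ * f₁ (-x) * f₁ (-x) := by rw [h1]
    have hfle : f₁ x ≤ f₁ (-x) := by
      by_contra hcon
      push_neg at hcon
      have hlt := mul_self_lt_mul_self (hf₁0 (-x)) hcon
      have := mul_lt_mul_of_pos_left hlt hp₁
      nlinarith [key]
    rw [h1]
    exact mul_le_mul_of_nonneg_left hfle hp₁.le
  have hkey0' : ∀ x : ℝ, x ≤ 0 → p₂ * f₂ x ≤ p₁ * f₁ x := by
    intro x hx
    have h := hkey0 (-x) (by linarith)
    have h1 := hsym x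
    have h2 := hsym (-x)
    rw [neg_neg] at h2
    linarith
  -- the minimum of the two weighted densities
  set L : ℝ → ℝ := fun x => min (p₁ * f₁ x) (p₂ * f₂ x) with hL
  have hL_meas : Measurable L := (hf₁.const_mul p₁).min (hf₂.const_mul p₂)
  have hL0 : ∀ x, 0 ≤ L x := fun x =>
    le_min (mul_nonneg hp₁.le (hf₁0 x)) (mul_nonneg hp₂.le (hf₂0 x))
  have hLm : ∀ x, L x ≤ m x := fun x =>
    (min_le_left _ _).trans (le_add_of_nonneg_right (mul_nonneg hp₂.le (hf₂0 x)))
  have hL_int : Integrable L :=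
    hm_int.mono' hL_meas.aestronglyMeasurable
      (Filter.Eventually.of_forall fun x => by
        rw [Real.norm_eq_abs, abs_of_nonneg (hL0 x)]; exact hLm x)
  have hL_even : ∀ x, L (-x) = L x := by
    intro x
    have h1 := hsym x
    have h2 := hsym (-x)
    rw [neg_neg] at h2
    simp only [hL]
    rw [← h1, h2, min_comm]
  have hL_pos_eq : ∀ x : ℝ, 0 ≤ x → L x = p₁ * f₁ x := fun x hx =>
    min_eq_left (hkey0 x hx)
  have hL_neg_eq : ∀ x : ℝ, x ≤ 0 → L x = p₂ * f₂ x := fun x hx =>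
    min_eq_right (hkey0' x hx)
  -- the two-point swap inequality
  have key_pos : ∀ a b : ℝ, 0 ≤ a → a ≤ b → L b * m a ≤ L a * m b := by
    intro a b ha hab
    rw [hL_pos_eq a ha, hL_pos_eq b (ha.trans hab)]
    simp only [hm]
    nlinarith [hMLR a b hab, mul_pos hp₁ hp₂]
  have hL_abs : ∀ z : ℝ, L |z| = L z := by
    intro z
    rcases abs_choice z with hc | hc
    · rw [hc]
    · rw [hc]; exact hL_even z
  have hm_abs : ∀ z : ℝ, m |z| = m z := by
    intro z
    rcases abs_choice z with hc | hc
    · rw [hc]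
    · rw [hc]; exact hm_even z
  have hkeyA : ∀ x ∈ Icc (-τ) τ, ∀ y ∉ Icc (-τ) τ, L y * m x ≤ L x * m y := by
    intro x hx y hy
    have hxa : |x| ≤ τ := abs_le.2 ⟨hx.1, hx.2⟩
    have hya : τ ≤ |y| := by
      simp only [mem_Icc, not_and_or, not_le] at hy
      rcases hy with hc | hc
      · exact le_abs.2 (Or.inr (by linarith))
      · exact le_abs.2 (Or.inl hc.le)
    have h := key_pos |x| |y| (abs_nonneg x) (hxa.trans hya)
    rwa [hL_abs, hL_abs, hm_abs, hm_abs] at h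
  -- reflection of integrals of even functions
  have hrefl : ∀ g : ℝ → ℝ, (∀ x, g (-x) = g x) →
      ∫ x in Iic (-τ), g x = ∫ x in Ioi τ, g x := by
    intro g hg
    have h := integral_comp_neg_Iic (-τ) g
    rw [neg_neg] at h
    rw [← h]
    exact integral_congr_ae (Filter.Eventually.of_forall fun x => (hg x).symm)
  -- splitting the real line at `-τ` and `τ`
  have hsplit : ∀ g : ℝ → ℝ, Integrable g →
      (∫ x in Iic (-τ), g x) + ((∫ x in Icc (-τ) τ, g x) + ∫ x in Ici τ, g x) =
        ∫ x, g x := by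
    intro g hg
    have h1 : (∫ x in Ioc (-τ) τ, g x) + ∫ x in Ioi τ, g x =
        ∫ x in Ioi (-τ), g x := by
      rw [← setIntegral_union (Ioc_disjoint_Ioi le_rfl) measurableSet_Ioi
        hg.integrableOn hg.integrableOn, Ioc_union_Ioi_eq_Ioi (by linarith : -τ ≤ τ)]
    have h2 : (∫ x in Iic (-τ), g x) + ∫ x in Ioi (-τ), g x = ∫ x, g x :=
      intervalIntegral.integral_Iic_add_Ioi hg.integrableOn hg.integrableOn
    rw [← setIntegral_congr_set Ioc_ae_eq_Icc,
      setIntegral_congr_set Ioi_ae_eq_Ici.symm, h1, h2]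
  -- Part 1
  have hIci_m : ∫ x in Ici τ, m x = ∫ x in Iic (-τ), m x := by
    rw [hrefl m hm_even, setIntegral_congr_set Ioi_ae_eq_Ici]
  have part1 : 1 - 2 * ∫ x in Ici τ, m x = γ := by
    have hs := hsplit m hm_int
    rw [hm_total, hτγ] at hs
    rw [hIci_m] at hs ⊢
    linarith
  -- the sets of the optimal classifier
  have hY2 : {x | Ystar x = 2} = Ici τ := by
    ext x
    rw [mem_setOf_eq, hYstar x, mem_Ici]
    split_ifs with h1 h2 <;> simp [h1]
  have hY1ae : {x | Ystar x = 1} =ᵐ[volume] Iic (-τ) := by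
    have hset : {x | Ystar x = 1} = {x : ℝ | x ≤ -τ ∧ ¬ τ ≤ x} := by
      ext x
      rw [mem_setOf_eq, hYstar x, mem_setOf_eq]
      split_ifs with h1 h2
      · simp [h1]
      · simp [h1, h2]
      · simp [h1, h2]
    rw [hset]
    refine MeasureTheory.ae_eq_set.2 ⟨?_, ?_⟩
    · refine measure_mono_null (fun x hx => ?_) (measure_empty (μ := volume))
      exact absurd hx.1.1 (by simpa using hx.2)
    · refine measure_mono_null (fun x hx => ?_) (measure_singleton (0 : ℝ))
      rcases hx with ⟨hx1, hx2⟩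
      simp only [mem_setOf_eq, not_and_or, not_not] at hx2
      have hx3 : τ ≤ x := by
        rcases hx2 with hc | hc
        · exact absurd (mem_Iic.1 hx1) hc
        · simpa using hc
      have : x = 0 := by
        have := mem_Iic.1 hx1
        simp only [mem_Iic] at hx1
        nlinarith
      simp [this]
  have hI2 : ∫ x in {x | Ystar x = 2}, p₁ * f₁ x = p₁ * ∫ x in Ici τ, f₁ x := by
    rw [hY2, integral_const_mul]
  have hI1 : ∫ x in {x | Ystar x = 1}, p₂ * f₂ x = p₂ * ∫ x in Iic (-τ), f₂ x := by
    rw [setIntegral_congr_set hY1ae, integral_const_mul]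
  refine ⟨part1, by rw [hI2, hI1], ?_⟩
  -- Part 3: optimality
  intro h hmeas hle2 habst
  have h1γ : (0 : ℝ) < 1 - γ := by
    have := hγ.2
    linarith
  rw [hI2, hI1]
  rw [div_le_div_iff_of_pos_right h1γ]
  -- measurable classification sets
  have hB0 : MeasurableSet {x | h x = 0} := hmeas (measurableSet_singleton 0)
  have hB1 : MeasurableSet {x | h x = 1} := hmeas (measurableSet_singleton 1)
  have hB2 : MeasurableSet {x | h x = 2} := hmeas (measurableSet_singleton 2)
  have hd12 : Disjoint {x | h x = 1} {x | h x = 2} := by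
    rw [disjoint_left]
    intro x hx1 hx2
    simp only [mem_setOf_eq] at hx1 hx2
    omega
  have hd0 : Disjoint {x | h x = 0} ({x | h x = 1} ∪ {x | h x = 2}) := by
    rw [disjoint_left]
    intro x hx0 hx12
    simp only [mem_setOf_eq, mem_union] at hx0 hx12
    omega
  have hunion : {x | h x = 0} ∪ ({x | h x = 1} ∪ {x | h x = 2}) = univ := by
    ext x
    have := hle2 x
    simp only [mem_union, mem_setOf_eq, mem_univ, iff_true]
    omega
  have hLsplit_h : (∫ x in {x | h x = 0}, L x) +
      ((∫ x in {x | h x = 1}, L x) + ∫ x in {x | h x = 2}, L x) = ∫ x, L x := by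
    rw [← setIntegral_union hd12 hB2 hL_int.integrableOn hL_int.integrableOn,
      ← setIntegral_union hd0 (hB1.union hB2) hL_int.integrableOn
        hL_int.integrableOn, hunion, setIntegral_univ]
  -- lower bound for the risk of h
  have e2 : ∫ x in {x | h x = 2}, L x ≤ ∫ x in {x | h x = 2}, p₁ * f₁ x :=
    setIntegral_mono_on hL_int.integrableOn
      ((hf₁int.const_mul p₁).integrableOn) hB2 fun x _ => min_le_left _ _
  have e1 : ∫ x in {x | h x = 1}, L x ≤ ∫ x in {x | h x = 1}, p₂ * f₂ x :=
    setIntegral_mono_on hL_int.integrableOn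
      ((hf₂int.const_mul p₂).integrableOn) hB1 fun x _ => min_le_right _ _
  -- the risk of Y* in terms of L
  have eY2 : p₁ * ∫ x in Ici τ, f₁ x = ∫ x in Ici τ, L x := by
    rw [← integral_const_mul]
    exact (setIntegral_congr_fun measurableSet_Ici fun x hx =>
      hL_pos_eq x (hτ.trans hx)).symm
  have eY1 : p₂ * ∫ x in Iic (-τ), f₂ x = ∫ x in Iic (-τ), L x := by
    rw [← integral_const_mul]
    exact (setIntegral_congr_fun measurableSet_Iic fun x hx =>
      hL_neg_eq x (le_trans hx (by linarith))).symm
  have hLsplit_Y : (∫ x in Iic (-τ), L x) +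
      ((∫ x in Icc (-τ) τ, L x) + ∫ x in Ici τ, L x) = ∫ x, L x :=
    hsplit L hL_int
  -- comparison of the abstention regions
  have hcomp : ∫ x in {x | h x = 0}, L x ≤ ∫ x in Icc (-τ) τ, L x := by
    refine integral_min_compare L m (Icc (-τ) τ) {x | h x = 0} measurableSet_Icc
      hB0 hL_meas hL0 hLm hm_int hkeyA ?_
    rw [habst, hτγ]
  linarith
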